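/- Every generalized 2-Baer group is locally nilpotent. -/

import Mathlib

/-- A subgroup H is 2-subnormal in G if H ⊴ K ⊴ G for some subgroup K. -/
def IsTwoSubnormal {G : Type*} [Group G] (H : Subgroup G) : Prop :=
  ∃ K : Subgroup G, H ≤ K ∧ (H.subgroupOf K).Normal ∧ K.Normal

/-- T₂(G) is the subgroup generated by all elements whose cyclic subgroup is not
2-subnormal in G. -/
def T2 (G : Type*) [Group G] : Subgroup G :=
  Subgroup.closure {x : G | ¬ IsTwoSubnormal (Subgroup.zpowers x)}

open Subgroup
open scoped commutatorElement

section Aux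

variable {G : Type*} [Group G]

/-- A "lower central"-style series for a subgroup, computed inside the ambient group.
`dser A 0 = ⊤`, `dser A 1 = A`, `dser A (n+2) = ⁅dser A (n+1), A⁆`. -/
def dser (A : Subgroup G) : ℕ → Subgroup G
  | 0 => ⊤
  | 1 => A
  | (n+2) => ⁅dser A (n+1), A⁆

lemma dser_normal {A : Subgroup G} (hA : A.Normal) : ∀ n, (dser A n).Normal
  | 0 => inferInstanceAs (⊤ : Subgroup G).Normal
  | 1 => hA
  | (n+2) => by
      haveI := dser_normal hA (n+1)
      haveI := hA
      exact Subgroup.commutator_normal _ _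

lemma dser_comm_le {A : Subgroup G} (hA : A.Normal) : ∀ n, ⁅dser A n, A⁆ ≤ dser A (n+1)
  | 0 => by
      haveI := hA
      exact Subgroup.commutator_le_right _ _
  | (n+1) => le_rfl

lemma dser_succ_le {A : Subgroup G} (hA : A.Normal) : ∀ n, dser A (n+1) ≤ dser A n
  | 0 => le_top
  | (n+1) => by
      haveI := dser_normal hA (n+1)
      exact Subgroup.commutator_le_left _ _

lemma dser_antitone {A : Subgroup G} (hA : A.Normal) {m n : ℕ} (h : m ≤ n) :
    dser A n ≤ dser A m := by
  induction n with
  | zero => simp [Nat.le_zero.mp h]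
  | succ k ih =>
      rcases Nat.lt_or_ge m (k+1) with h' | h'
      · exact (dser_succ_le hA k).trans (ih (Nat.lt_succ_iff.mp h'))
      · have : m = k + 1 := le_antisymm h h'
        simp [this]

/-- The subgroup of elements commuting with `C` modulo the normal subgroup `R`. -/
def commW (C R : Subgroup G) (hR : R.Normal) : Subgroup G where
  carrier := {x : G | ∀ c ∈ C, ⁅x, c⁆ ∈ R}
  one_mem' := by
    intro c _
    simpa using R.one_mem
  mul_mem' := by
    intro a b ha hb c hc
    have h : ⁅a * b, c⁆ = (a * ⁅b, c⁆ * a⁻¹) * ⁅a, c⁆ := by group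
    rw [h]
    exact R.mul_mem (hR.conj_mem _ (hb c hc) a) (ha c hc)
  inv_mem' := by
    intro a ha c hc
    have h : ⁅a⁻¹, c⁆ = a⁻¹ * ⁅a, c⁆⁻¹ * (a⁻¹)⁻¹ := by group
    rw [h]
    exact hR.conj_mem _ (R.inv_mem (ha c hc)) a⁻¹

lemma mem_commW {C R : Subgroup G} (hR : R.Normal) {x : G} :
    x ∈ commW C R hR ↔ ∀ c ∈ C, ⁅x, c⁆ ∈ R := Iff.rfl

lemma commutator_le_iff' {X C R : Subgroup G} (hR : R.Normal) :
    ⁅X, C⁆ ≤ R ↔ X ≤ commW C R hR := by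
  rw [Subgroup.commutator_le]
  constructor
  · intro h x hx
    exact fun c hc => h x hx c hc
  · intro h x hx c hc
    exact h hx c hc

lemma normal_iSup {ι : Sort*} (f : ι → Subgroup G) (hf : ∀ i, (f i).Normal) :
    (⨆ i, f i).Normal := by
  constructor
  intro n hn g
  have key : ∀ h : G, (⨆ i, f i) ≤ Subgroup.comap (MulAut.conj h).toMonoidHom (⨆ i, f i) := by
    intro h
    refine iSup_le fun i => ?_
    intro x hx
    have : (MulAut.conj h) x ∈ f i := by
      simpa [MulAut.conj_apply] using (hf i).conj_mem x hx h
    exact Subgroup.mem_comap.mpr (le_iSup f i this)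
  have := key g hn
  simpa [MulAut.conj_apply] using this

lemma normal_biSup {ι : Type*} (s : Finset ι) (f : ι → Subgroup G)
    (hf : ∀ i, (f i).Normal) : (⨆ i ∈ s, f i).Normal := by
  refine normal_iSup _ fun i => normal_iSup _ fun _ => hf i

/-- Fitting-type theorem for the `dser` series: the join of two normal subgroups
whose series reach ⊥ has a series reaching ⊥. -/
lemma fitting_sup {A B : Subgroup G} (hA : A.Normal) (hB : B.Normal)
    {a b : ℕ} (ha : dser A a = ⊥) (hb : dser B b = ⊥) :
    ∃ c, dser (A ⊔ B) c = ⊥ := by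
  haveI := hA; haveI := hB
  have claim : ∀ k, dser (A ⊔ B) k ≤
      ⨆ p ∈ Finset.HasAntidiagonal.antidiagonal k, (dser A p.1 ⊓ dser B p.2) := by
    intro k
    induction k with
    | zero =>
        have h00 : ((0, 0) : ℕ × ℕ) ∈ Finset.HasAntidiagonal.antidiagonal 0 := by simp
        refine le_trans (le_inf le_top le_top :
          dser (A ⊔ B) 0 ≤ dser A (0,0).1 ⊓ dser B (0,0).2) ?_
        exact le_iSup₂ (f := fun (p : ℕ × ℕ) (_ : p ∈ Finset.HasAntidiagonal.antidiagonal 0) =>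
          dser A p.1 ⊓ dser B p.2) (0, 0) h00
    | succ n ih =>
        cases n with
        | zero =>
            have h10 : ((1, 0) : ℕ × ℕ) ∈ Finset.HasAntidiagonal.antidiagonal 1 := by simp
            have h01 : ((0, 1) : ℕ × ℕ) ∈ Finset.HasAntidiagonal.antidiagonal 1 := by simp
            show A ⊔ B ≤ _
            refine sup_le ?_ ?_
            · refine le_trans (le_inf le_rfl le_top :
                A ≤ dser A (1,0).1 ⊓ dser B (1,0).2) ?_
              exact le_iSup₂ (f := fun (p : ℕ × ℕ) (_ : p ∈ Finset.HasAntidiagonal.antidiagonal 1) =>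
                dser A p.1 ⊓ dser B p.2) (1, 0) h10
            · refine le_trans (le_inf le_top le_rfl :
                B ≤ dser A (0,1).1 ⊓ dser B (0,1).2) ?_
              exact le_iSup₂ (f := fun (p : ℕ × ℕ) (_ : p ∈ Finset.HasAntidiagonal.antidiagonal 1) =>
                dser A p.1 ⊓ dser B p.2) (0, 1) h01
        | succ m =>
            have hR : (⨆ p ∈ Finset.HasAntidiagonal.antidiagonal (m + 1 + 1),
                (dser A p.1 ⊓ dser B p.2)).Normal := by
              refine normal_biSup _ _ fun p => ?_
              haveI := dser_normal hA p.1
              haveI := dser_normal hB p.2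
              exact Subgroup.normal_inf_normal _ _
            rw [show dser (A ⊔ B) (m + 1 + 1) = ⁅dser (A ⊔ B) (m + 1), A ⊔ B⁆ from rfl,
              commutator_le_iff' hR]
            refine le_trans ih (iSup₂_le fun p hp => ?_)
            rw [← commutator_le_iff' hR, Subgroup.commutator_comm, commutator_le_iff' hR]
            have hp' : p.1 + p.2 = m + 1 := Finset.HasAntidiagonal.mem_antidiagonal.mp hp
            refine sup_le ?_ ?_
            · rw [← commutator_le_iff' hR, Subgroup.commutator_comm]
              have h1 : ⁅dser A p.1 ⊓ dser B p.2, A⁆ ≤ dser A (p.1 + 1) ⊓ dser B p.2 := by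
                refine le_inf ?_ ?_
                · exact (Subgroup.commutator_mono inf_le_left le_rfl).trans
                    (dser_comm_le hA p.1)
                · haveI := dser_normal hB p.2
                  exact (Subgroup.commutator_mono inf_le_right le_rfl).trans
                    (Subgroup.commutator_le_left _ _)
              refine h1.trans ?_
              have hmem : ((p.1 + 1, p.2) : ℕ × ℕ) ∈ Finset.HasAntidiagonal.antidiagonal (m + 1 + 1) := by
                rw [Finset.HasAntidiagonal.mem_antidiagonal]; omega
              exact le_iSup₂ (f := fun (q : ℕ × ℕ) (_ : q ∈ Finset.HasAntidiagonal.antidiagonal (m + 1 + 1)) =>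
                dser A q.1 ⊓ dser B q.2) (p.1 + 1, p.2) hmem
            · rw [← commutator_le_iff' hR, Subgroup.commutator_comm]
              have h1 : ⁅dser A p.1 ⊓ dser B p.2, B⁆ ≤ dser A p.1 ⊓ dser B (p.2 + 1) := by
                refine le_inf ?_ ?_
                · haveI := dser_normal hA p.1
                  exact (Subgroup.commutator_mono inf_le_left le_rfl).trans
                    (Subgroup.commutator_le_left _ _)
                · exact (Subgroup.commutator_mono inf_le_right le_rfl).trans
                    (dser_comm_le hB p.2)
              refine h1.trans ?_
              have hmem : ((p.1, p.2 + 1) : ℕ × ℕ) ∈ Finset.HasAntidiagonal.antidiagonal (m + 1 + 1) := by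
                rw [Finset.HasAntidiagonal.mem_antidiagonal]; omega
              exact le_iSup₂ (f := fun (q : ℕ × ℕ) (_ : q ∈ Finset.HasAntidiagonal.antidiagonal (m + 1 + 1)) =>
                dser A q.1 ⊓ dser B q.2) (p.1, p.2 + 1) hmem
  refine ⟨a + b, le_bot_iff.mp ?_⟩
  refine (claim (a + b)).trans (iSup₂_le fun p hp => ?_)
  have hp' : p.1 + p.2 = a + b := Finset.HasAntidiagonal.mem_antidiagonal.mp hp
  rcases le_or_gt a p.1 with h | h
  · have : dser A p.1 = ⊥ := le_bot_iff.mp ((dser_antitone hA h).trans ha.le)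
    exact inf_le_left.trans this.le
  · have hb' : b ≤ p.2 := by omega
    have : dser B p.2 = ⊥ := le_bot_iff.mp ((dser_antitone hB hb').trans hb.le)
    exact inf_le_right.trans this.le

/-- If the `dser` series of `A` reaches ⊥, then `A` is nilpotent as a group. -/
lemma nilpotent_of_dser_bot {A : Subgroup G} (hA : A.Normal) {n : ℕ}
    (h : dser A n = ⊥) : Group.IsNilpotent ↥A := by
  have hmap : ∀ k, Subgroup.map A.subtype ((⊤ : Subgroup ↥A).lowerCentralSeries k) = dser A (k + 1) := by
    intro k
    induction k with
    | zero =>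
        show Subgroup.map A.subtype ⊤ = A
        rw [← MonoidHom.range_eq_map, Subgroup.range_subtype]
    | succ k ih =>
        have hlcs : (⊤ : Subgroup ↥A).lowerCentralSeries (k + 1) = ⁅(⊤ : Subgroup ↥A).lowerCentralSeries k, ⊤⁆ := rfl
        have hd : dser A (k + 1 + 1) = ⁅dser A (k + 1), A⁆ := rfl
        rw [hlcs, hd, Subgroup.map_commutator, ih, ← MonoidHom.range_eq_map,
          Subgroup.range_subtype]
  -- bump the index to be positive
  have h' : dser A (n + 1) = ⊥ := le_bot_iff.mp ((dser_succ_le hA n).trans h.le)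
  rw [Subgroup.nilpotent_iff_lowerCentralSeries]
  refine ⟨n, ?_⟩
  have hthis := hmap n
  rw [h'] at hthis
  exact (Subgroup.map_eq_bot_iff_of_injective _ (Subgroup.subtype_injective A)).mp hthis

/-- Core commutator computation: if `u, v` (and their inverses) conjugate `a` to powers
of `a`, then `⁅u, v⁆` commutes with `a`. -/
lemma conj_comm_of_conj_mem {a u v : G}
    (hu : u * a * u⁻¹ ∈ zpowers a) (hu' : u⁻¹ * a * (u⁻¹)⁻¹ ∈ zpowers a)
    (hv : v * a * v⁻¹ ∈ zpowers a) (hv' : v⁻¹ * a * (v⁻¹)⁻¹ ∈ zpowers a) :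
    ⁅u, v⁆ * a * ⁅u, v⁆⁻¹ = a := by
  obtain ⟨s, hs⟩ := mem_zpowers_iff.mp hu
  obtain ⟨s', hs'⟩ := mem_zpowers_iff.mp hu'
  obtain ⟨t, ht⟩ := mem_zpowers_iff.mp hv
  obtain ⟨t', ht'⟩ := mem_zpowers_iff.mp hv'
  have hA : a ^ (s * s') = a := by
    have h1 : u * (u⁻¹ * a * (u⁻¹)⁻¹) * u⁻¹ = a := by group
    calc a ^ (s * s') = (a ^ s) ^ s' := zpow_mul a s s'
      _ = (u * a * u⁻¹) ^ s' := by rw [hs]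
      _ = u * a ^ s' * u⁻¹ := conj_zpow
      _ = u * (u⁻¹ * a * (u⁻¹)⁻¹) * u⁻¹ := by rw [hs']
      _ = a := h1
  have hB : a ^ (t * t') = a := by
    have h1 : v * (v⁻¹ * a * (v⁻¹)⁻¹) * v⁻¹ = a := by group
    calc a ^ (t * t') = (a ^ t) ^ t' := zpow_mul a t t'
      _ = (v * a * v⁻¹) ^ t' := by rw [ht]
      _ = v * a ^ t' * v⁻¹ := conj_zpow
      _ = v * (v⁻¹ * a * (v⁻¹)⁻¹) * v⁻¹ := by rw [ht']
      _ = a := h1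
  have hexp : ⁅u, v⁆ * a * ⁅u, v⁆⁻¹
      = u * (v * (u⁻¹ * (v⁻¹ * a * (v⁻¹)⁻¹) * (u⁻¹)⁻¹) * v⁻¹) * u⁻¹ := by
    group
  rw [hexp, ← ht']
  have h2 : u⁻¹ * a ^ t' * (u⁻¹)⁻¹ = a ^ (s' * t') := by
    calc u⁻¹ * a ^ t' * (u⁻¹)⁻¹ = (u⁻¹ * a * (u⁻¹)⁻¹) ^ t' := conj_zpow.symm
      _ = (a ^ s') ^ t' := by rw [hs']
      _ = a ^ (s' * t') := (zpow_mul a s' t').symm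
  rw [h2]
  have h3 : v * a ^ (s' * t') * v⁻¹ = a ^ (t * (s' * t')) := by
    calc v * a ^ (s' * t') * v⁻¹ = (v * a * v⁻¹) ^ (s' * t') := conj_zpow.symm
      _ = (a ^ t) ^ (s' * t') := by rw [ht]
      _ = a ^ (t * (s' * t')) := (zpow_mul a t (s' * t')).symm
  rw [h3]
  have h4 : u * a ^ (t * (s' * t')) * u⁻¹ = a ^ (s * (t * (s' * t'))) := by
    calc u * a ^ (t * (s' * t')) * u⁻¹ = (u * a * u⁻¹) ^ (t * (s' * t')) := conj_zpow.symm
      _ = (a ^ s) ^ (t * (s' * t')) := by rw [hs]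
      _ = a ^ (s * (t * (s' * t'))) := (zpow_mul a s (t * (s' * t'))).symm
  rw [h4]
  have hre : s * (t * (s' * t')) = (s * s') * (t * t') := by ring
  rw [hre, zpow_mul, hA, hB]

/-- If `zpowers x` is 2-subnormal, then the normal closure of `{x}` satisfies
`⁅⁅N,N⁆,N⁆ = ⊥`, i.e. it is nilpotent of class ≤ 2. -/
lemma dser_normalClosure_of_good {x : G} (h : IsTwoSubnormal (zpowers x)) :
    dser (Subgroup.normalClosure ({x} : Set G)) 3 = ⊥ := by
  obtain ⟨K, hxK, hnorm, hKnorm⟩ := h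
  set N := Subgroup.normalClosure ({x} : Set G) with hNdef
  haveI hNnormal : N.Normal := Subgroup.normalClosure_normal
  have hNK : N ≤ K := by
    refine Subgroup.normalClosure_le_normal ?_
    intro y hy
    rw [Set.eq_of_mem_singleton hy]
    exact hxK (mem_zpowers x)
  have key : ∀ n ∈ N, ∀ z ∈ zpowers x, n * z * n⁻¹ ∈ zpowers x := by
    intro n hn z hz
    have hnK : n ∈ K := hNK hn
    have hzK : z ∈ K := hxK hz
    have hzsub : (⟨z, hzK⟩ : K) ∈ (zpowers x).subgroupOf K := by
      simpa [Subgroup.mem_subgroupOf] using hz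
    have := hnorm.conj_mem _ hzsub ⟨n, hnK⟩
    simpa [Subgroup.mem_subgroupOf] using this
  have keyS : ∀ a ∈ Group.conjugatesOfSet ({x} : Set G), ∀ n ∈ N,
      n * a * n⁻¹ ∈ zpowers a := by
    intro a ha n hn
    rw [Group.mem_conjugatesOfSet_iff] at ha
    obtain ⟨y, hy, hconj⟩ := ha
    have hconj' : IsConj x a := by rwa [Set.eq_of_mem_singleton hy] at hconj
    obtain ⟨c, hc⟩ := isConj_iff.mp hconj'
    have hm : c⁻¹ * n * c ∈ N := by
      have := hNnormal.conj_mem n hn c⁻¹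
      simpa using this
    have h1 : (c⁻¹ * n * c) * x * (c⁻¹ * n * c)⁻¹ ∈ zpowers x :=
      key _ hm x (mem_zpowers x)
    obtain ⟨k, hk⟩ := mem_zpowers_iff.mp h1
    refine mem_zpowers_iff.mpr ⟨k, ?_⟩
    have hak : a ^ k = c * x ^ k * c⁻¹ := by rw [← hc]; exact conj_zpow
    rw [hak, hk, ← hc]
    group
  have hNgen : N = closure (Group.conjugatesOfSet ({x} : Set G)) := rfl
  have hcomm : ∀ u ∈ N, ∀ v ∈ N, ∀ g ∈ N, g * ⁅u, v⁆ = ⁅u, v⁆ * g := by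
    intro u hu v hv
    have hinvu : u⁻¹ ∈ N := N.inv_mem hu
    have hinvv : v⁻¹ ∈ N := N.inv_mem hv
    have hcentral : ∀ a ∈ Group.conjugatesOfSet ({x} : Set G),
        ⁅u, v⁆ * a * ⁅u, v⁆⁻¹ = a := by
      intro a ha
      exact conj_comm_of_conj_mem (keyS a ha u hu) (keyS a ha u⁻¹ hinvu)
        (keyS a ha v hv) (keyS a ha v⁻¹ hinvv)
    have hsub : N ≤ Subgroup.centralizer {⁅u, v⁆} := by
      rw [hNgen]
      refine (closure_le _).mpr ?_
      intro a ha
      rw [SetLike.mem_coe, Subgroup.mem_centralizer_iff]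
      intro g hg
      rcases hg with rfl
      have hce := hcentral a ha
      calc ⁅u, v⁆ * a = (⁅u, v⁆ * a * ⁅u, v⁆⁻¹) * ⁅u, v⁆ := by group
        _ = a * ⁅u, v⁆ := by rw [hce]
    intro g hg
    have hmem := hsub hg
    rw [Subgroup.mem_centralizer_iff] at hmem
    exact (hmem ⁅u, v⁆ rfl).symm
  rw [show dser N 3 = ⁅⁅N, N⁆, N⁆ from rfl,
    Subgroup.commutator_eq_bot_iff_le_centralizer, Subgroup.commutator_le]
  intro u hu v hv
  rw [Subgroup.mem_centralizer_iff]
  intro g hg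
  exact hcomm u hu v hv g hg

lemma good_one : IsTwoSubnormal (zpowers (1 : G)) := by
  refine ⟨⊥, ?_, ?_, inferInstance⟩
  · simp [Subgroup.zpowers_one_eq_bot]
  · rw [Subgroup.zpowers_one_eq_bot, Subgroup.bot_subgroupOf]
    infer_instance

lemma sup_nc_nilpotent (B : Finset G)
    (h : ∀ b ∈ B, IsTwoSubnormal (zpowers b)) :
    (B.sup fun b => Subgroup.normalClosure ({b} : Set G)).Normal ∧
      ∃ c, dser (B.sup fun b => Subgroup.normalClosure ({b} : Set G)) c = ⊥ := by
  classical
  induction B using Finset.induction_on with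
  | empty =>
      rw [Finset.sup_empty]
      exact ⟨inferInstance, 1, rfl⟩
  | @insert a s ha ih =>
      have hbg : ∀ b ∈ s, IsTwoSubnormal (zpowers b) := fun b hb =>
        h b (Finset.mem_insert_of_mem hb)
      obtain ⟨hsnorm, c, hc⟩ := ih hbg
      have hagood : IsTwoSubnormal (zpowers a) := h a (Finset.mem_insert_self a s)
      have haN : (Subgroup.normalClosure ({a} : Set G)).Normal :=
        Subgroup.normalClosure_normal
      have hanil : dser (Subgroup.normalClosure ({a} : Set G)) 3 = ⊥ :=
        dser_normalClosure_of_good hagood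
      rw [Finset.sup_insert]
      haveI := haN; haveI := hsnorm
      obtain ⟨c', hc'⟩ := fitting_sup haN hsnorm hanil hc
      exact ⟨Subgroup.sup_normal _ _, c', hc'⟩

end Aux

/-- Every generalized 2-Baer group is locally nilpotent: every
finitely generated subgroup is nilpotent. -/
theorem stmt_9 {G : Type*} [Group G] (hG : T2 G ≠ ⊤) :
    ∀ S : Finset G, Group.IsNilpotent ↥(Subgroup.closure (S : Set G)) := by
  intro S
  classical
  have hgood_T2 : ∀ x : G, ¬ IsTwoSubnormal (Subgroup.zpowers x) → x ∈ T2 G :=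
    fun x hx => Subgroup.subset_closure hx
  obtain ⟨g, hg⟩ : ∃ g : G, g ∉ T2 G := by
    by_contra h
    push_neg at h
    exact hG (top_unique fun y _ => h y)
  have hgoodg : IsTwoSubnormal (Subgroup.zpowers g) := by
    by_contra h; exact hg (hgood_T2 g h)
  have decomp : ∀ s : G, ∃ u v : G, IsTwoSubnormal (Subgroup.zpowers u) ∧
      IsTwoSubnormal (Subgroup.zpowers v) ∧ s = u * v := by
    intro s
    by_cases hs : IsTwoSubnormal (Subgroup.zpowers s)
    · exact ⟨s, 1, hs, good_one, by simp⟩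
    · have hsT : s ∈ T2 G := hgood_T2 s hs
      have h1 : s * g ∉ T2 G := by
        intro hsg
        exact hg (by simpa using (T2 G).mul_mem ((T2 G).inv_mem hsT) hsg)
      have goodsg : IsTwoSubnormal (Subgroup.zpowers (s * g)) := by
        by_contra h; exact h1 (hgood_T2 _ h)
      have goodginv : IsTwoSubnormal (Subgroup.zpowers g⁻¹) := by
        rwa [Subgroup.zpowers_inv]
      exact ⟨s * g, g⁻¹, goodsg, goodginv, by group⟩
  choose u v hu hv huv using decomp
  set B : Finset G := S.image u ∪ S.image v with hBdef
  have hBgood : ∀ b ∈ B, IsTwoSubnormal (Subgroup.zpowers b) := by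
    intro b hb
    rw [hBdef, Finset.mem_union] at hb
    rcases hb with hb | hb
    · obtain ⟨s, _, rfl⟩ := Finset.mem_image.mp hb
      exact hu s
    · obtain ⟨s, _, rfl⟩ := Finset.mem_image.mp hb
      exact hv s
  obtain ⟨hMnorm, c, hc⟩ := sup_nc_nilpotent B hBgood
  set M : Subgroup G := B.sup (fun b => Subgroup.normalClosure ({b} : Set G)) with hMdef
  have hSM : Subgroup.closure (S : Set G) ≤ M := by
    rw [Subgroup.closure_le]
    intro s hs
    rw [SetLike.mem_coe]
    have h1 : u s ∈ M := by
      have hmem : u s ∈ B := by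
        rw [hBdef, Finset.mem_union]
        exact Or.inl (Finset.mem_image.mpr ⟨s, hs, rfl⟩)
      exact (Finset.le_sup (f := fun b => Subgroup.normalClosure ({b} : Set G)) hmem)
        (Subgroup.subset_normalClosure rfl)
    have h2 : v s ∈ M := by
      have hmem : v s ∈ B := by
        rw [hBdef, Finset.mem_union]
        exact Or.inr (Finset.mem_image.mpr ⟨s, hs, rfl⟩)
      exact (Finset.le_sup (f := fun b => Subgroup.normalClosure ({b} : Set G)) hmem)
        (Subgroup.subset_normalClosure rfl)
    rw [huv s]
    exact M.mul_mem h1 h2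
  haveI : Group.IsNilpotent ↥M := nilpotent_of_dser_bot hMnorm hc
  haveI : Group.IsNilpotent ↥((Subgroup.closure (S : Set G)).subgroupOf M) :=
    Subgroup.isNilpotent _
  exact nilpotent_of_mulEquiv (Subgroup.subgroupOfEquivOfLe hSM)
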